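/- Let a ∼ N(0, l⁻² I_p) and b ∼ Uniform[0, 2π] be independent. Then for the random Fourier feature pair, E[2 cos(aᵀx + b) cos(aᵀx' + b)] = e^{−‖x − x'‖₂² / (2 l²)}, i.e., the random Fourier feature estimator is an unbiased estimator of the Gaussian RBF kernel. -/

import Mathlib

open Matrix MeasureTheory ProbabilityTheory

/-- 1D characteristic function of a centered Gaussian. -/
lemma gaussian_cexp (v : NNReal) (hv : v ≠ 0) (t : ℝ) :
    ∫ a : ℝ, Complex.exp (a * t * Complex.I) ∂(gaussianReal 0 v)
      = ((Real.exp (-(v : ℝ) * t ^ 2 / 2) : ℝ) : ℂ) := by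
  have hv' : (0 : ℝ) < v := lt_of_le_of_ne v.coe_nonneg (by exact_mod_cast Ne.symm hv)
  rw [gaussianReal_of_var_ne_zero _ hv]
  have hmeas : Measurable fun a : ℝ => (gaussianPDFReal 0 v a).toNNReal :=
    (measurable_gaussianPDFReal 0 v).real_toNNReal
  have hd : (volume.withDensity (gaussianPDF 0 v))
      = volume.withDensity (fun a => ((gaussianPDFReal 0 v a).toNNReal : ENNReal)) := rfl
  rw [hd, integral_withDensity_eq_integral_smul hmeas]
  have hpt : ∀ a : ℝ, (gaussianPDFReal 0 v a).toNNReal • Complex.exp (a * t * Complex.I)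
      = (Real.sqrt (2 * Real.pi * v))⁻¹ •
          Complex.exp ((-(1 / (2 * (v:ℝ))) : ℂ) * (a:ℂ) ^ 2 + ((t:ℂ) * Complex.I) * a + 0) := by
    intro a
    rw [NNReal.smul_def, Real.coe_toNNReal _ (gaussianPDFReal_nonneg 0 v a), gaussianPDFReal,
      mul_smul]
    congr 1
    rw [Complex.real_smul, Complex.ofReal_exp, ← Complex.exp_add]
    congr 1
    push_cast
    have : ((v:ℂ)) ≠ 0 := by exact_mod_cast hv'.ne'
    field_simp
    ring
  simp_rw [hpt]
  rw [integral_smul, integral_cexp_quadratic (by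
    simp only [Complex.neg_re, Complex.ofReal_re]
    norm_num
    positivity : (-(1 / (2 * (v:ℝ)) : ℂ)).re < 0)]
  have h1 : ((Real.pi : ℂ) / -(-(1 / (2 * (v:ℝ)) : ℂ))) = ((2 * Real.pi * v : ℝ) : ℂ) := by
    have : ((v:ℂ)) ≠ 0 := by exact_mod_cast hv'.ne'
    push_cast
    field_simp
  rw [h1]
  have h2 : ((2 * Real.pi * v : ℝ) : ℂ) ^ (1 / 2 : ℂ)
      = ((Real.sqrt (2 * Real.pi * v) : ℝ) : ℂ) := by
    rw [show (1 / 2 : ℂ) = ((1 / 2 : ℝ) : ℂ) by norm_num,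
      ← Complex.ofReal_cpow (by positivity), Real.sqrt_eq_rpow]
  rw [h2]
  have h3 : ((0:ℂ) - ((t:ℂ) * Complex.I) ^ 2 / (4 * -(1 / (2 * (v:ℝ)))))
      = ((-(v:ℝ) * t ^ 2 / 2 : ℝ) : ℂ) := by
    have : ((v:ℂ)) ≠ 0 := by exact_mod_cast hv'.ne'
    push_cast
    rw [mul_pow, Complex.I_sq]
    field_simp
    ring
  rw [h3, Complex.real_smul, ← mul_assoc, ← Complex.ofReal_mul,
    inv_mul_cancel₀ (by positivity : Real.sqrt (2 * Real.pi * v) ≠ 0)]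
  rw [Complex.ofReal_one, one_mul, Complex.ofReal_exp]

/-- Integral of a product of functions against a pi measure. -/
lemma integral_pi_prod {p : ℕ} (μ : Measure ℝ) [SigmaFinite μ] (f : Fin p → ℝ → ℂ) :
    ∫ a : Fin p → ℝ, ∏ i, f i (a i) ∂(Measure.pi fun _ => μ) = ∏ i, ∫ x, f i x ∂μ := by
  letI : MeasureSpace ℝ := ⟨μ⟩
  letI : SigmaFinite (volume : Measure ℝ) := ‹SigmaFinite μ›
  exact MeasureTheory.integral_fintype_prod_eq_prod f

/-- Multivariate: expectation of `cos (a ⬝ᵥ c)` under iid centered Gaussians. -/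
lemma pi_gaussian_cos {p : ℕ} (v : NNReal) (hv : v ≠ 0) (c : Fin p → ℝ) :
    ∫ a : Fin p → ℝ, Real.cos (a ⬝ᵥ c) ∂(Measure.pi fun _ => gaussianReal 0 v)
      = Real.exp (-(v : ℝ) * (c ⬝ᵥ c) / 2) := by
  have hint : Integrable (fun a : Fin p → ℝ => Complex.exp ((a ⬝ᵥ c : ℝ) * Complex.I))
      (Measure.pi fun _ => gaussianReal 0 v) := by
    have hc : Continuous fun a : Fin p → ℝ => a ⬝ᵥ c :=
      continuous_finset_sum _ fun i _ => (continuous_apply i).mul continuous_const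
    refine (integrable_const (1:ℝ)).mono' ?_ ?_
    · exact (Complex.continuous_exp.comp
        ((Complex.continuous_ofReal.comp hc).mul continuous_const)).aestronglyMeasurable
    · filter_upwards with a
      rw [Complex.norm_exp]
      simp
  have key : ∫ a : Fin p → ℝ, Complex.exp ((a ⬝ᵥ c : ℝ) * Complex.I)
      ∂(Measure.pi fun _ => gaussianReal 0 v)
      = ((Real.exp (-(v : ℝ) * (c ⬝ᵥ c) / 2) : ℝ) : ℂ) := by
    have hprod : ∀ a : Fin p → ℝ, Complex.exp ((a ⬝ᵥ c : ℝ) * Complex.I)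
        = ∏ i, Complex.exp ((a i : ℂ) * (c i : ℝ) * Complex.I) := by
      intro a
      rw [← Complex.exp_sum]
      congr 1
      rw [dotProduct]
      push_cast
      rw [Finset.sum_mul]
    simp_rw [hprod]
    rw [integral_pi_prod (gaussianReal 0 v)
      (fun i x => Complex.exp ((x:ℂ) * (c i : ℝ) * Complex.I))]
    have h4 : ∀ i, ∫ x : ℝ, Complex.exp ((x:ℂ) * (c i : ℝ) * Complex.I) ∂(gaussianReal 0 v)
        = ((Real.exp (-(v : ℝ) * (c i) ^ 2 / 2) : ℝ) : ℂ) := fun i => gaussian_cexp v hv (c i)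
    simp_rw [h4, ← Complex.ofReal_prod, ← Real.exp_sum]
    norm_cast
    congr 1
    rw [dotProduct, ← Finset.sum_div, Finset.mul_sum]
    congr 1
    exact Finset.sum_congr rfl fun i _ => by ring
  have : ∀ a : Fin p → ℝ, Real.cos (a ⬝ᵥ c)
      = (Complex.exp ((a ⬝ᵥ c : ℝ) * Complex.I)).re := by
    intro a
    rw [Complex.exp_ofReal_mul_I_re]
  simp_rw [this]
  rw [show (fun a : Fin p → ℝ => (Complex.exp ((a ⬝ᵥ c : ℝ) * Complex.I)).re)
      = fun a : Fin p → ℝ => RCLike.re (Complex.exp ((a ⬝ᵥ c : ℝ) * Complex.I)) from rfl,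
    integral_re hint, key]
  simp only [RCLike.re_to_complex, Complex.ofReal_re]

/-- Unbiasedness of random Fourier features for the Gaussian RBF kernel:
with `a ∼ N(0, l⁻² I_p)` (independent `N(0, l⁻²)` coordinates) and
`b ∼ Uniform[0, 2π]` independent of `a`,
`E[2 cos(aᵀx + b) cos(aᵀx' + b)] = exp(−‖x − x'‖₂² / (2l²))`. -/
theorem random_fourier_features_unbiased
    {p : ℕ} (l : NNReal) (hl : 0 < l) (x x' : Fin p → ℝ) :
    ∫ ab : (Fin p → ℝ) × ℝ,
        2 * Real.cos (ab.1 ⬝ᵥ x + ab.2) * Real.cos (ab.1 ⬝ᵥ x' + ab.2)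
      ∂((Measure.pi fun _ : Fin p => gaussianReal 0 (l⁻¹ ^ 2)).prod
          ((ENNReal.ofReal (2 * Real.pi))⁻¹ •
            volume.restrict (Set.Icc (0 : ℝ) (2 * Real.pi))))
      = Real.exp (-((x - x') ⬝ᵥ (x - x')) / (2 * (l : ℝ) ^ 2)) := by
  set ν : Measure ℝ := (ENNReal.ofReal (2 * Real.pi))⁻¹ •
      volume.restrict (Set.Icc (0 : ℝ) (2 * Real.pi)) with hν
  have h2pi : (0:ℝ) < 2 * Real.pi := by positivity
  haveI hνprob : IsProbabilityMeasure ν := by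
    constructor
    rw [hν, Measure.smul_apply, Measure.restrict_apply MeasurableSet.univ, Set.univ_inter,
      Real.volume_Icc, smul_eq_mul, sub_zero]
    exact ENNReal.inv_mul_cancel (by simpa using h2pi) ENNReal.ofReal_ne_top
  have hcdot : ∀ y : Fin p → ℝ, Continuous fun a : (Fin p → ℝ) × ℝ => a.1 ⬝ᵥ y + a.2 := by
    intro y
    exact (continuous_finset_sum _ fun i _ =>
      ((continuous_apply i).comp continuous_fst).mul continuous_const).add continuous_snd
  have hint : Integrable
      (fun ab : (Fin p → ℝ) × ℝ =>
        2 * Real.cos (ab.1 ⬝ᵥ x + ab.2) * Real.cos (ab.1 ⬝ᵥ x' + ab.2))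
      ((Measure.pi fun _ : Fin p => gaussianReal 0 (l⁻¹ ^ 2)).prod ν) := by
    refine (integrable_const (2:ℝ)).mono' ?_ ?_
    · exact ((continuous_const.mul (Real.continuous_cos.comp (hcdot x))).mul (Real.continuous_cos.comp (hcdot x'))).aestronglyMeasurable
    · filter_upwards with ab
      rw [Real.norm_eq_abs, abs_mul, abs_mul, abs_two]
      nlinarith [Real.abs_cos_le_one (ab.1 ⬝ᵥ x + ab.2), Real.abs_cos_le_one (ab.1 ⬝ᵥ x' + ab.2),
        abs_nonneg (Real.cos (ab.1 ⬝ᵥ x + ab.2)), abs_nonneg (Real.cos (ab.1 ⬝ᵥ x' + ab.2))]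
  rw [integral_prod _ hint]
  have hinner : ∀ a : Fin p → ℝ,
      ∫ b, 2 * Real.cos (a ⬝ᵥ x + b) * Real.cos (a ⬝ᵥ x' + b) ∂ν
        = Real.cos (a ⬝ᵥ (x - x')) := by
    intro a
    set u := a ⬝ᵥ x
    set v := a ⬝ᵥ x'
    have hid : ∀ b : ℝ, 2 * Real.cos (u + b) * Real.cos (v + b)
        = Real.cos (u - v) + Real.cos ((u + v) + 2 * b) := by
      intro b
      simp only [Real.cos_add, Real.cos_sub, Real.sin_add, Real.cos_two_mul, Real.sin_two_mul]
      linear_combination 2 * Real.sin u * Real.sin v * Real.sin_sq_add_cos_sq b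
    simp_rw [hid]
    have hi2 : Integrable (fun b => Real.cos ((u + v) + 2 * b)) ν := by
      rw [hν]
      refine Integrable.smul_measure ?_ (by simp [Real.pi_pos])
      exact ((Real.continuous_cos.comp
        (continuous_const.add (continuous_const.mul continuous_id))).integrableOn_Icc)
    rw [integral_add (integrable_const _) hi2, integral_const, probReal_univ]
    have hz : ∫ b, Real.cos ((u + v) + 2 * b) ∂ν = 0 := by
      rw [hν, integral_smul_measure, integral_Icc_eq_integral_Ioc,
        ← intervalIntegral.integral_of_le h2pi.le,
        intervalIntegral.integral_comp_add_mul Real.cos (two_ne_zero) (u + v)]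
      rw [integral_cos]
      rw [mul_zero, add_zero, show (u + v) + 2 * (2 * Real.pi) = ((u + v) + 2 * Real.pi) + 2 * Real.pi by ring,
        Real.sin_add_two_pi, Real.sin_add_two_pi, sub_self]
      simp
    rw [hz, add_zero]
    simp [dotProduct_sub, u, v]
  simp_rw [hinner]
  have hvne : (l⁻¹ ^ 2 : NNReal) ≠ 0 := by
    simp [pow_ne_zero, inv_ne_zero, hl.ne']
  rw [pi_gaussian_cos (l⁻¹ ^ 2) hvne (x - x')]
  congr 1
  have hcoe : ((l⁻¹ ^ 2 : NNReal) : ℝ) = ((l : ℝ) ^ 2)⁻¹ := by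
    push_cast
    rw [inv_pow]
  rw [hcoe]
  have hlne : (l : ℝ) ≠ 0 := by exact_mod_cast hl.ne'
  generalize (x - x') ⬝ᵥ (x - x') = s
  field_simp
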